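/- For a random vector X = (X_1,...,X_n) of discrete random variables each taking values in alphabets of size at most K, with n ≥ 2, the O-information is bounded: -(n-2) log K ≤ Ω(X) ≤ (n-2) log K. -/

import Mathlib

open Classical Finset Real

namespace HOI

/-- Distribution (pmf) of a random variable `X` on a finite sample space with mass `p`. -/
noncomputable def pdist {Ω α : Type} [Fintype Ω] (p : Ω → ℝ) (X : Ω → α) (a : α) : ℝ :=
  ∑ ω, if X ω = a then p ω else 0

/-- Shannon entropy of a finitely-supported discrete random variable. -/
noncomputable def ent {Ω α : Type} [Fintype Ω] [Fintype α] (p : Ω → ℝ) (X : Ω → α) : ℝ :=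
  ∑ a, Real.negMulLog (pdist p X a)

/-- Conditional entropy H(X|Y) = H(X,Y) - H(Y). -/
noncomputable def cent {Ω α β : Type} [Fintype Ω] [Fintype α] [Fintype β]
    (p : Ω → ℝ) (X : Ω → α) (Y : Ω → β) : ℝ :=
  ent p (fun ω => (X ω, Y ω)) - ent p Y

/-- Mutual information I(X;Y). -/
noncomputable def mi {Ω α β : Type} [Fintype Ω] [Fintype α] [Fintype β]
    (p : Ω → ℝ) (X : Ω → α) (Y : Ω → β) : ℝ :=
  ent p X + ent p Y - ent p (fun ω => (X ω, Y ω))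

/-- Conditional mutual information I(X;Y|Z). -/
noncomputable def cmi {Ω α β γ : Type} [Fintype Ω] [Fintype α] [Fintype β] [Fintype γ]
    (p : Ω → ℝ) (X : Ω → α) (Y : Ω → β) (Z : Ω → γ) : ℝ :=
  cent p X Z + cent p Y Z - cent p (fun ω => (X ω, Y ω)) Z

/-- Interaction information II(X;Y;Z) = I(X;Y) - I(X;Y|Z). -/
noncomputable def ii {Ω α β γ : Type} [Fintype Ω] [Fintype α] [Fintype β] [Fintype γ]
    (p : Ω → ℝ) (X : Ω → α) (Y : Ω → β) (Z : Ω → γ) : ℝ :=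
  mi p X Y - cmi p X Y Z

/-- Sub-vector of components of `X` with indices in `s`. -/
def subvec {Ω : Type} {n : ℕ} {α : Fin n → Type} (X : ∀ i, Ω → α i) (s : Finset (Fin n)) :
    Ω → ((i : {j // j ∈ s}) → α i.1) :=
  fun ω i => X i.1 ω

/-- The full random vector. -/
def fullvec {Ω : Type} {n : ℕ} {α : Fin n → Type} (X : ∀ i, Ω → α i) : Ω → (∀ i, α i) :=
  fun ω i => X i ω

/-- Joint entropy of the components of `X` with indices in `s`. -/
noncomputable def vecH {Ω : Type} [Fintype Ω] {n : ℕ} {α : Fin n → Type} [∀ i, Fintype (α i)]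
    (p : Ω → ℝ) (X : ∀ i, Ω → α i) (s : Finset (Fin n)) : ℝ :=
  ent p (subvec X s)

/-- Total correlation. -/
noncomputable def TC {Ω : Type} [Fintype Ω] {n : ℕ} {α : Fin n → Type} [∀ i, Fintype (α i)]
    (p : Ω → ℝ) (X : ∀ i, Ω → α i) : ℝ :=
  (∑ j, ent p (X j)) - ent p (fullvec X)

/-- Dual total correlation. -/
noncomputable def DTC {Ω : Type} [Fintype Ω] {n : ℕ} {α : Fin n → Type} [∀ i, Fintype (α i)]
    (p : Ω → ℝ) (X : ∀ i, Ω → α i) : ℝ :=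
  ent p (fullvec X) - ∑ j, (ent p (fullvec X) - vecH p X (Finset.univ \ {j}))

/-- O-information. -/
noncomputable def Oinfo {Ω : Type} [Fintype Ω] {n : ℕ} {α : Fin n → Type} [∀ i, Fintype (α i)]
    (p : Ω → ℝ) (X : ∀ i, Ω → α i) : ℝ :=
  ((n : ℝ) - 2) * ent p (fullvec X) + ∑ j, (ent p (X j) - vecH p X (Finset.univ \ {j}))

/-- Redundancy-synergy index. -/
noncomputable def RSI {Ω β : Type} [Fintype Ω] [Fintype β] {n : ℕ} {α : Fin n → Type}
    [∀ i, Fintype (α i)] (p : Ω → ℝ) (X : ∀ i, Ω → α i) (Y : Ω → β) : ℝ :=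
  (∑ j, mi p (X j) Y) - mi p (fullvec X) Y

end HOI

open HOI

set_option linter.unusedSectionVars false
set_option linter.unusedVariables false


section Basic
variable {Ω ι : Type} [Fintype Ω] {p : Ω → ℝ}

/-- Gibbs' inequality. -/
lemma gibbs' {ι : Type} [Fintype ι] {w q : ι → ℝ} (hw : ∀ i, 0 ≤ w i)
    (hq : ∀ i, 0 ≤ q i) (hw1 : ∑ i, w i = 1) (hq1 : ∑ i, q i ≤ 1)
    (hz : ∀ i, w i ≠ 0 → q i ≠ 0) :
    ∑ i, negMulLog (w i) ≤ ∑ i, -(w i * log (q i)) := by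
  rw [← sub_nonpos, ← Finset.sum_sub_distrib]
  have h1 : ∀ i, negMulLog (w i) - -(w i * log (q i)) ≤ q i - w i := by
    intro i
    rcases eq_or_lt_of_le (hw i) with h | h
    · simp [← h, hq i]
    · have hqi : 0 < q i := lt_of_le_of_ne (hq i) (Ne.symm (hz i (ne_of_gt h)))
      have : log (q i) - log (w i) ≤ q i / w i - 1 := by
        rw [← Real.log_div (ne_of_gt hqi) (ne_of_gt h)]
        exact Real.log_le_sub_one_of_pos (div_pos hqi h)
      have := mul_le_mul_of_nonneg_left this (le_of_lt h)
      calc negMulLog (w i) - -(w i * log (q i)) = w i * (log (q i) - log (w i)) := by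
            simp [negMulLog]; ring
        _ ≤ w i * (q i / w i - 1) := this
        _ = q i - w i := by field_simp
  calc ∑ i, (negMulLog (w i) - -(w i * log (q i))) ≤ ∑ i, (q i - w i) :=
        Finset.sum_le_sum fun i _ => h1 i
    _ ≤ 0 := by rw [Finset.sum_sub_distrib, hw1]; linarith

lemma negMulLog_sum_le {s : Finset ι} {g : ι → ℝ} (hg : ∀ i ∈ s, 0 ≤ g i) :
    negMulLog (∑ i ∈ s, g i) ≤ ∑ i ∈ s, negMulLog (g i) := by
  have hT : ∀ i ∈ s, g i ≤ ∑ j ∈ s, g j := fun i hi => Finset.single_le_sum hg hi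
  have : negMulLog (∑ i ∈ s, g i) = ∑ i ∈ s, -(g i * log (∑ j ∈ s, g j)) := by
    rw [negMulLog, neg_mul, Finset.sum_mul]
    rw [← Finset.sum_neg_distrib]
  rw [this]
  refine Finset.sum_le_sum fun i hi => ?_
  rcases eq_or_lt_of_le (hg i hi) with h | h
  · simp [← h]
  · rw [negMulLog, neg_mul, neg_le_neg_iff]
    exact mul_le_mul_of_nonneg_left (Real.log_le_log h (hT i hi)) (le_of_lt h)
end Basic



section PD
variable {Ω α β γ : Type} [Fintype Ω] [Fintype α] [Fintype β] [Fintype γ]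
  {p : Ω → ℝ}

lemma pdist_nonneg (hp : ∀ ω, 0 ≤ p ω) (X : Ω → α) (a : α) : 0 ≤ pdist p X a :=
  Finset.sum_nonneg fun ω _ => by split <;> simp [hp ω]

lemma sum_pdist (X : Ω → α) : ∑ a, pdist p X a = ∑ ω, p ω := by
  unfold pdist
  rw [Finset.sum_comm]
  exact Finset.sum_congr rfl fun ω _ => by simp

lemma pdist_le_sum (hp : ∀ ω, 0 ≤ p ω) (X : Ω → α) (a : α) :
    pdist p X a ≤ ∑ ω, p ω := by
  rw [← sum_pdist X]
  exact Finset.single_le_sum (fun b _ => pdist_nonneg hp X b) (Finset.mem_univ a)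

/-- fiberwise decomposition of the pdist of a composition -/
lemma pdist_comp (f : α → β) (X : Ω → α) (b : β) :
    pdist p (fun ω => f (X ω)) b = ∑ a ∈ univ.filter (fun a => f a = b), pdist p X a := by
  unfold pdist
  rw [Finset.sum_comm]
  refine Finset.sum_congr rfl fun ω _ => ?_
  rw [Finset.sum_ite_eq (univ.filter (fun a => f a = b)) (X ω) (fun _ => p ω)]
  simp

end PD

section Marg
variable {Ω α β γ : Type} [Fintype Ω] [Fintype α] [Fintype β] [Fintype γ] {p : Ω → ℝ}

lemma pdist_pair_fst (X : Ω → α) (Y : Ω → β) (a : α) :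
    ∑ b, pdist p (fun ω => (X ω, Y ω)) (a, b) = pdist p X a := by
  unfold pdist
  rw [Finset.sum_comm]
  refine Finset.sum_congr rfl fun ω _ => ?_
  by_cases h : X ω = a <;> simp [Prod.ext_iff, h]

lemma pdist_pair_snd (X : Ω → α) (Y : Ω → β) (b : β) :
    ∑ a, pdist p (fun ω => (X ω, Y ω)) (a, b) = pdist p Y b := by
  unfold pdist
  rw [Finset.sum_comm]
  refine Finset.sum_congr rfl fun ω _ => ?_
  by_cases h : Y ω = b <;> simp [Prod.ext_iff, h]

lemma pdist_triple_b (A : Ω → α) (B : Ω → β) (C : Ω → γ) (a : α) (c : γ) :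
    ∑ b, pdist p (fun ω => (A ω, B ω, C ω)) (a, b, c)
      = pdist p (fun ω => (A ω, C ω)) (a, c) := by
  unfold pdist
  rw [Finset.sum_comm]
  refine Finset.sum_congr rfl fun ω _ => ?_
  by_cases h1 : A ω = a <;> by_cases h2 : C ω = c <;> simp [Prod.ext_iff, h1, h2]

lemma pdist_triple_a (A : Ω → α) (B : Ω → β) (C : Ω → γ) (b : β) (c : γ) :
    ∑ a, pdist p (fun ω => (A ω, B ω, C ω)) (a, b, c)
      = pdist p (fun ω => (B ω, C ω)) (b, c) := by
  unfold pdist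
  rw [Finset.sum_comm]
  refine Finset.sum_congr rfl fun ω _ => ?_
  by_cases h1 : B ω = b <;> by_cases h2 : C ω = c <;> simp [Prod.ext_iff, h1, h2]

end Marg

section Ent
variable {Ω α β γ : Type} [Fintype Ω] [Fintype α] [Fintype β] [Fintype γ]
  {p : Ω → ℝ} (hp : ∀ ω, 0 ≤ p ω) (hp1 : ∑ ω, p ω = 1)
include hp hp1

lemma pdist_le_one (X : Ω → α) (a : α) : pdist p X a ≤ 1 := hp1 ▸ pdist_le_sum hp X a

lemma sum_pdist_one (X : Ω → α) : ∑ a, pdist p X a = 1 := by rw [sum_pdist, hp1]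

lemma ent_nonneg (X : Ω → α) : 0 ≤ ent p X :=
  Finset.sum_nonneg fun a _ => negMulLog_nonneg (pdist_nonneg hp X a) (pdist_le_one hp hp1 X a)

lemma ent_le_log_card [Nonempty α] (X : Ω → α) : ent p X ≤ Real.log (Fintype.card α) := by
  have hc : (0:ℝ) < (Fintype.card α : ℝ) := by
    exact_mod_cast Fintype.card_pos
  have := gibbs' (w := pdist p X) (q := fun _ => ((Fintype.card α : ℝ))⁻¹)
    (pdist_nonneg hp X) (fun _ => by positivity) (sum_pdist_one hp hp1 X)
    (by simp [Finset.card_univ, mul_inv_cancel₀ (ne_of_gt hc)])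
    (fun i _ => by positivity)
  refine le_trans this ?_
  simp only [Real.log_inv, mul_neg, neg_neg]
  rw [← Finset.sum_mul, sum_pdist_one hp hp1 X, one_mul]

lemma ent_comp_le (f : α → β) (X : Ω → α) :
    ent p (fun ω => f (X ω)) ≤ ent p X := by
  unfold ent
  calc ∑ b, negMulLog (pdist p (fun ω => f (X ω)) b)
      ≤ ∑ b, ∑ a ∈ univ.filter (fun a => f a = b), negMulLog (pdist p X a) := by
        refine Finset.sum_le_sum fun b _ => ?_
        rw [pdist_comp]
        exact negMulLog_sum_le fun a _ => pdist_nonneg hp X a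
    _ = ∑ a, negMulLog (pdist p X a) := by
        exact Finset.sum_fiberwise univ f (fun a => negMulLog (pdist p X a))

lemma ent_comp_eq {f : α → β} (hf : Function.Injective f) (X : Ω → α) :
    ent p (fun ω => f (X ω)) = ent p X := by
  unfold ent
  rw [← Finset.sum_subset (Finset.subset_univ (Finset.image f univ))
    (fun b _ hb => ?_), Finset.sum_image (fun a _ a' _ h => hf h)]
  · refine Finset.sum_congr rfl fun a _ => ?_
    congr 1
    unfold pdist
    exact Finset.sum_congr rfl fun ω _ => by simp [hf.eq_iff]
  · have : pdist p (fun ω => f (X ω)) b = 0 := by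
      unfold pdist
      refine Finset.sum_eq_zero fun ω _ => ?_
      have : f (X ω) ≠ b := fun h => hb (h ▸ Finset.mem_image_of_mem f (Finset.mem_univ _))
      simp [this]
    rw [this, negMulLog_zero]

end Ent

section Sub
variable {Ω α β γ : Type} [Fintype Ω] [Fintype α] [Fintype β] [Fintype γ]
  {p : Ω → ℝ} (hp : ∀ ω, 0 ≤ p ω) (hp1 : ∑ ω, p ω = 1)
include hp hp1

lemma ent_pair_le (X : Ω → α) (Y : Ω → β) :
    ent p (fun ω => (X ω, Y ω)) ≤ ent p X + ent p Y := by
  set W : Ω → α × β := fun ω => (X ω, Y ω) with hW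
  set w : α × β → ℝ := pdist p W with hw
  have hwnn : ∀ ab, 0 ≤ w ab := pdist_nonneg hp W
  have hmargX : ∀ a, ∑ b, w (a, b) = pdist p X a := fun a => pdist_pair_fst X Y a
  have hmargY : ∀ b, ∑ a, w (a, b) = pdist p Y b := fun b => pdist_pair_snd X Y b
  have hXpos : ∀ a b, w (a, b) ≠ 0 → 0 < pdist p X a := by
    intro a b h
    rw [← hmargX a]
    have := Finset.single_le_sum (fun b' _ => hwnn (a, b')) (Finset.mem_univ b)
    have h0 := lt_of_le_of_ne (hwnn (a, b)) (Ne.symm h)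
    linarith
  have hYpos : ∀ a b, w (a, b) ≠ 0 → 0 < pdist p Y b := by
    intro a b h
    rw [← hmargY b]
    have := Finset.single_le_sum (fun a' _ => hwnn (a', b)) (Finset.mem_univ a)
    have h0 := lt_of_le_of_ne (hwnn (a, b)) (Ne.symm h)
    linarith
  have key := gibbs' (w := w) (q := fun ab => pdist p X ab.1 * pdist p Y ab.2)
    hwnn (fun ab => mul_nonneg (pdist_nonneg hp X _) (pdist_nonneg hp Y _))
    (sum_pdist_one hp hp1 W)
    (by rw [Fintype.sum_prod_type]
        simp only [← Finset.mul_sum, ← Finset.sum_mul]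
        rw [sum_pdist_one hp hp1 X, sum_pdist_one hp hp1 Y, one_mul])
    (fun ab h => by
      have := hXpos ab.1 ab.2 (by simpa using h)
      have := hYpos ab.1 ab.2 (by simpa using h)
      positivity)
  refine le_trans key (le_of_eq ?_)
  have hsplit : ∀ ab : α × β, -(w ab * log (pdist p X ab.1 * pdist p Y ab.2))
      = -(w ab * log (pdist p X ab.1)) + -(w ab * log (pdist p Y ab.2)) := by
    intro ab
    rcases eq_or_ne (w ab) 0 with h | h
    · simp [h]
    · rw [Real.log_mul (ne_of_gt (hXpos ab.1 ab.2 h)) (ne_of_gt (hYpos ab.1 ab.2 h))]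
      ring
  rw [Finset.sum_congr rfl (fun ab _ => hsplit ab), Finset.sum_add_distrib]
  congr 1
  · rw [Fintype.sum_prod_type]
    unfold ent
    refine Finset.sum_congr rfl fun a _ => ?_
    dsimp only
    rw [Finset.sum_neg_distrib, ← Finset.sum_mul, hmargX a, negMulLog, neg_mul]
  · rw [Fintype.sum_prod_type_right]
    unfold ent
    refine Finset.sum_congr rfl fun b _ => ?_
    dsimp only
    rw [Finset.sum_neg_distrib, ← Finset.sum_mul, hmargY b, negMulLog, neg_mul]

lemma ent_ssa (A : Ω → α) (B : Ω → β) (C : Ω → γ) :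
    ent p (fun ω => (A ω, B ω, C ω)) + ent p C
      ≤ ent p (fun ω => (A ω, C ω)) + ent p (fun ω => (B ω, C ω)) := by
  set W : Ω → α × β × γ := fun ω => (A ω, B ω, C ω) with hW
  set w : α × β × γ → ℝ := pdist p W with hw
  set qAC : α × γ → ℝ := pdist p (fun ω => (A ω, C ω)) with hqAC
  set qBC : β × γ → ℝ := pdist p (fun ω => (B ω, C ω)) with hqBC
  set qC : γ → ℝ := pdist p C with hqC
  set q : α × β × γ → ℝ :=
    fun x => if qC x.2.2 = 0 then 0 else qAC (x.1, x.2.2) * qBC (x.2.1, x.2.2) / qC x.2.2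
    with hq
  have hwnn : ∀ x, 0 ≤ w x := pdist_nonneg hp W
  have hACnn : ∀ y, 0 ≤ qAC y := pdist_nonneg hp _
  have hBCnn : ∀ y, 0 ≤ qBC y := pdist_nonneg hp _
  have hCnn : ∀ c, 0 ≤ qC c := pdist_nonneg hp _
  have m1 : ∀ a c, ∑ b, w (a, b, c) = qAC (a, c) := fun a c => pdist_triple_b A B C a c
  have m2 : ∀ b c, ∑ a, w (a, b, c) = qBC (b, c) := fun b c => pdist_triple_a A B C b c
  have mAC : ∀ c, ∑ a, qAC (a, c) = qC c := fun c => pdist_pair_snd A C c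
  have mBC : ∀ c, ∑ b, qBC (b, c) = qC c := fun c => pdist_pair_snd B C c
  have hACpos : ∀ a b c, w (a, b, c) ≠ 0 → 0 < qAC (a, c) := by
    intro a b c h
    rw [← m1 a c]
    have := Finset.single_le_sum (fun b' _ => hwnn (a, b', c)) (Finset.mem_univ b)
    have h0 := lt_of_le_of_ne (hwnn (a, b, c)) (Ne.symm h)
    linarith
  have hBCpos : ∀ a b c, w (a, b, c) ≠ 0 → 0 < qBC (b, c) := by
    intro a b c h
    rw [← m2 b c]
    have := Finset.single_le_sum (fun a' _ => hwnn (a', b, c)) (Finset.mem_univ a)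
    have h0 := lt_of_le_of_ne (hwnn (a, b, c)) (Ne.symm h)
    linarith
  have hCpos : ∀ a b c, w (a, b, c) ≠ 0 → 0 < qC c := by
    intro a b c h
    rw [← mAC c]
    have := Finset.single_le_sum (fun a' _ => hACnn (a', c)) (Finset.mem_univ a)
    have h0 := hACpos a b c h
    linarith
  have reorder : ∀ f : α × β × γ → ℝ, ∑ x : α × β × γ, f x = ∑ a, ∑ b, ∑ c, f (a, b, c) := by
    intro f
    rw [Fintype.sum_prod_type]
    exact Finset.sum_congr rfl fun a _ => Fintype.sum_prod_type _
  have hcfix : ∀ c, ∑ a, ∑ b, q (a, b, c) = qC c := by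
    intro c
    by_cases hc : qC c = 0
    · simp [hq, hc]
    · have hb : ∀ a, ∑ b, q (a, b, c) = qAC (a, c) := by
        intro a
        simp only [hq, hc, if_false]
        rw [← Finset.sum_div, ← Finset.mul_sum, mBC c, mul_div_assoc, div_self hc, mul_one]
      rw [Finset.sum_congr rfl fun a _ => hb a, mAC c]
  have hq1 : ∑ x, q x = 1 := by
    calc ∑ x, q x = ∑ a, ∑ b, ∑ c, q (a, b, c) := reorder q
      _ = ∑ a, ∑ c, ∑ b, q (a, b, c) := Finset.sum_congr rfl fun a _ => Finset.sum_comm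
      _ = ∑ c, ∑ a, ∑ b, q (a, b, c) := Finset.sum_comm
      _ = ∑ c, qC c := Finset.sum_congr rfl fun c _ => hcfix c
      _ = 1 := sum_pdist_one hp hp1 C
  have hqnn : ∀ x, 0 ≤ q x := by
    intro x
    simp only [hq]
    split
    · exact le_rfl
    · exact div_nonneg (mul_nonneg (hACnn _) (hBCnn _)) (hCnn _)
  have key := gibbs' (w := w) (q := q) hwnn hqnn (sum_pdist_one hp hp1 W) (le_of_eq hq1)
    (fun x h => by
      have h1 := hACpos x.1 x.2.1 x.2.2 (by simpa using h)
      have h2 := hBCpos x.1 x.2.1 x.2.2 (by simpa using h)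
      have h3 := hCpos x.1 x.2.1 x.2.2 (by simpa using h)
      simp only [hq, if_neg (ne_of_gt h3)]
      positivity)
  have hsplit : ∀ x : α × β × γ, -(w x * log (q x))
      = -(w x * log (qAC (x.1, x.2.2))) + -(w x * log (qBC (x.2.1, x.2.2)))
        + w x * log (qC x.2.2) := by
    intro x
    rcases eq_or_ne (w x) 0 with h | h
    · simp [h]
    · have h1 := hACpos x.1 x.2.1 x.2.2 (by simpa using h)
      have h2 := hBCpos x.1 x.2.1 x.2.2 (by simpa using h)
      have h3 := hCpos x.1 x.2.1 x.2.2 (by simpa using h)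
      simp only [hq, if_neg (ne_of_gt h3)]
      rw [Real.log_div (by positivity) (ne_of_gt h3),
        Real.log_mul (ne_of_gt h1) (ne_of_gt h2)]
      ring
  have hrhs : ∑ x, -(w x * log (q x))
      = ent p (fun ω => (A ω, C ω)) + ent p (fun ω => (B ω, C ω)) - ent p C := by
    rw [Finset.sum_congr rfl fun x _ => hsplit x]
    rw [Finset.sum_add_distrib, Finset.sum_add_distrib]
    have e1 : ∑ x : α × β × γ, -(w x * log (qAC (x.1, x.2.2)))
        = ent p (fun ω => (A ω, C ω)) := by
      rw [reorder]
      unfold ent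
      rw [Fintype.sum_prod_type]
      refine Finset.sum_congr rfl fun a _ => ?_
      rw [Finset.sum_comm]
      refine Finset.sum_congr rfl fun c _ => ?_
      dsimp only
      rw [Finset.sum_neg_distrib, ← Finset.sum_mul, m1 a c, negMulLog, neg_mul]
    have e2 : ∑ x : α × β × γ, -(w x * log (qBC (x.2.1, x.2.2)))
        = ent p (fun ω => (B ω, C ω)) := by
      rw [reorder]
      unfold ent
      rw [Fintype.sum_prod_type]
      rw [Finset.sum_comm]
      refine Finset.sum_congr rfl fun b _ => ?_
      rw [Finset.sum_comm]
      refine Finset.sum_congr rfl fun c _ => ?_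
      dsimp only
      rw [Finset.sum_neg_distrib, ← Finset.sum_mul, m2 b c, negMulLog, neg_mul]
    have e3 : ∑ x : α × β × γ, w x * log (qC x.2.2) = - ent p C := by
      rw [reorder]
      unfold ent
      rw [← Finset.sum_neg_distrib]
      calc ∑ a, ∑ b, ∑ c, w (a, b, c) * log (qC c)
          = ∑ a, ∑ c, ∑ b, w (a, b, c) * log (qC c) :=
            Finset.sum_congr rfl fun _ _ => Finset.sum_comm
        _ = ∑ c, ∑ a, ∑ b, w (a, b, c) * log (qC c) := Finset.sum_comm
        _ = ∑ c, -negMulLog (qC c) := by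
            refine Finset.sum_congr rfl fun c _ => ?_
            rw [Finset.sum_comm]
            rw [Finset.sum_congr rfl fun b (_ : b ∈ univ) => by
              rw [← Finset.sum_mul, m2 b c]]
            rw [← Finset.sum_mul, mBC c, negMulLog, neg_mul, neg_neg]
    rw [e1, e2, e3]
    ring
  have entW : ent p W = ∑ x, negMulLog (w x) := rfl
  calc ent p W + ent p C ≤ (∑ x, -(w x * log (q x))) + ent p C := by
        rw [entW]; exact add_le_add key le_rfl
    _ = ent p (fun ω => (A ω, C ω)) + ent p (fun ω => (B ω, C ω)) := by rw [hrhs]; ring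

end Sub

section Glue
variable {Ω : Type} [Fintype Ω] {p : Ω → ℝ} (hp : ∀ ω, 0 ≤ p ω) (hp1 : ∑ ω, p ω = 1)
include hp hp1
variable {n : ℕ} {α : Fin n → Type} [∀ i, Fintype (α i)] (X : ∀ i, Ω → α i)

lemma ent_subvec_univ : ent p (subvec X univ) = ent p (fullvec X) := by
  have hinj : Function.Injective
      (fun (v : ∀ i, α i) (i : {j // j ∈ (univ : Finset (Fin n))}) => v i.1) := by
    intro v w hvw
    funext i
    exact congrFun hvw ⟨i, Finset.mem_univ i⟩
  exact ent_comp_eq hp hp1 hinj (fullvec X)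

lemma ent_subvec_le_full (s : Finset (Fin n)) :
    ent p (subvec X s) ≤ ent p (fullvec X) :=
  ent_comp_le hp hp1 (fun (v : ∀ i, α i) (i : {j // j ∈ s}) => v i.1) (fullvec X)

lemma ent_X_le_subvec {j : Fin n} {s : Finset (Fin n)} (hj : j ∈ s) :
    ent p (X j) ≤ ent p (subvec X s) :=
  ent_comp_le hp hp1 (fun (v : (i : {k // k ∈ s}) → α i.1) => v ⟨j, hj⟩) (subvec X s)

lemma ent_subvec_insert (k : Fin n) (s : Finset (Fin n)) :
    ent p (subvec X (insert k s)) = ent p (fun ω => (X k ω, subvec X s ω)) := by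
  have hinj : Function.Injective
      (fun (v : (i : {j // j ∈ insert k s}) → α i.1) =>
        (v ⟨k, Finset.mem_insert_self k s⟩,
         fun (i : {j // j ∈ s}) => v ⟨i.1, Finset.mem_insert_of_mem i.2⟩)) := by
    intro v w hvw
    funext i
    rcases Finset.mem_insert.mp i.2 with h1 | h1
    · have hi : i = ⟨k, Finset.mem_insert_self k s⟩ := Subtype.ext h1
      rw [hi]
      exact congrArg Prod.fst hvw
    · have hi : i = ⟨i.1, Finset.mem_insert_of_mem h1⟩ := Subtype.ext rfl
      rw [hi]
      exact congrFun (congrArg Prod.snd hvw) ⟨i.1, h1⟩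
  exact (ent_comp_eq hp hp1 hinj (subvec X (insert k s))).symm

lemma ent_pairBC {k : Fin n} {s : Finset (Fin n)} (hk : k ∉ s) :
    ent p (fun ω => (subvec X (univ \ insert k s) ω, subvec X s ω))
      = ent p (subvec X (univ \ {k})) := by
  have mem1 : ∀ i : {j // j ∈ univ \ insert k s}, i.1 ∈ univ \ ({k} : Finset (Fin n)) := by
    intro i
    have := Finset.mem_sdiff.mp i.2
    simp only [Finset.mem_sdiff, Finset.mem_univ, true_and, Finset.mem_singleton]
    exact fun h => this.2 (by rw [h]; exact Finset.mem_insert_self k s)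
  have mem2 : ∀ i : {j // j ∈ s}, i.1 ∈ univ \ ({k} : Finset (Fin n)) := by
    intro i
    simp only [Finset.mem_sdiff, Finset.mem_univ, true_and, Finset.mem_singleton]
    exact fun h => hk (h ▸ i.2)
  have hinj : Function.Injective
      (fun (v : (i : {j // j ∈ univ \ ({k} : Finset (Fin n))}) → α i.1) =>
        ((fun (i : {j // j ∈ univ \ insert k s}) => v ⟨i.1, mem1 i⟩),
         (fun (i : {j // j ∈ s}) => v ⟨i.1, mem2 i⟩))) := by
    intro v w hvw
    funext i
    by_cases hs : i.1 ∈ s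
    · have hi : i = ⟨i.1, mem2 ⟨i.1, hs⟩⟩ := Subtype.ext rfl
      rw [hi]
      exact congrFun (congrArg Prod.snd hvw) ⟨i.1, hs⟩
    · have hik : i.1 ∈ univ \ insert k s := by
        have := Finset.mem_sdiff.mp i.2
        simp only [Finset.mem_sdiff, Finset.mem_univ, true_and, Finset.mem_insert]
        rintro (h | h)
        · exact this.2 (Finset.mem_singleton.mpr h)
        · exact hs h
      have hi : i = ⟨i.1, mem1 ⟨i.1, hik⟩⟩ := Subtype.ext rfl
      rw [hi]
      exact congrFun (congrArg Prod.fst hvw) ⟨i.1, hik⟩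
  exact ent_comp_eq hp hp1 hinj (subvec X (univ \ {k}))

lemma ent_triple_full {k : Fin n} {s : Finset (Fin n)} (hk : k ∉ s) :
    ent p (fun ω => (X k ω, subvec X (univ \ insert k s) ω, subvec X s ω))
      = ent p (fullvec X) := by
  have hinj : Function.Injective
      (fun (v : ∀ i, α i) =>
        (v k, (fun (i : {j // j ∈ univ \ insert k s}) => v i.1),
         (fun (i : {j // j ∈ s}) => v i.1))) := by
    intro v w hvw
    funext i
    by_cases hik : i = k
    · rw [hik]; exact congrArg Prod.fst hvw
    · by_cases his : i ∈ s
      · exact congrFun (congrArg (fun x => Prod.snd (Prod.snd x)) hvw) ⟨i, his⟩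
      · have : i ∈ univ \ insert k s := by
          simp only [Finset.mem_sdiff, Finset.mem_univ, true_and, Finset.mem_insert]
          rintro (h | h)
          exacts [hik h, his h]
        exact congrFun (congrArg (fun x => Prod.fst (Prod.snd x)) hvw) ⟨i, this⟩
  exact ent_comp_eq hp hp1 hinj (fullvec X)

lemma ssa_step {k : Fin n} {s : Finset (Fin n)} (hk : k ∉ s) :
    ent p (fullvec X) + ent p (subvec X s)
      ≤ ent p (subvec X (insert k s)) + ent p (subvec X (univ \ {k})) := by
  have h := ent_ssa hp hp1 (p := p) (X k) (subvec X (univ \ insert k s)) (subvec X s)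
  rw [ent_triple_full hp hp1 X hk, ent_pairBC hp hp1 X hk, ← ent_subvec_insert hp hp1] at h
  exact h

lemma chainQ (j0 : Fin n) (s : Finset (Fin n)) (hj0 : j0 ∉ s) :
    ∑ j ∈ s, (ent p (fullvec X) - ent p (subvec X (univ \ {j})))
      ≤ ent p (subvec X (insert j0 s)) - ent p (X j0) := by
  induction s using Finset.induction_on with
  | empty =>
      rw [Finset.sum_empty, sub_nonneg]
      exact ent_X_le_subvec hp hp1 X (Finset.mem_insert_self j0 ∅)
  | @insert k s hk ih =>
      have hj0k : j0 ≠ k := fun h => hj0 (h ▸ Finset.mem_insert_self k s)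
      have hj0s : j0 ∉ s := fun h => hj0 (Finset.mem_insert_of_mem h)
      have hkins : k ∉ insert j0 s := by
        simp only [Finset.mem_insert]
        rintro (h | h)
        exacts [hj0k h.symm, hk h]
      have hssa := ssa_step hp hp1 (p := p) X (k := k) (s := insert j0 s) hkins
      rw [Finset.insert_comm] at hssa
      rw [Finset.sum_insert hk]
      have := ih hj0s
      linarith

lemma subadd_chain (s : Finset (Fin n)) :
    ent p (subvec X s) ≤ ∑ j ∈ s, ent p (X j) := by
  induction s using Finset.induction_on with
  | empty =>
      haveI : IsEmpty {j // j ∈ (∅ : Finset (Fin n))} := ⟨fun i => Finset.notMem_empty i.1 i.2⟩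
      haveI : Unique ((i : {j // j ∈ (∅ : Finset (Fin n))}) → α i.1) :=
        Pi.uniqueOfIsEmpty _
      have h := ent_le_log_card hp hp1 (p := p) (subvec X (∅ : Finset (Fin n)))
      rw [Fintype.card_unique, Nat.cast_one, Real.log_one] at h
      simpa using h
  | @insert k s hk ih =>
      rw [Finset.sum_insert hk, ent_subvec_insert hp hp1]
      exact le_trans (ent_pair_le hp hp1 (X k) (subvec X s)) (by linarith)


end Glue

/-- bounds on the O-information. -/
theorem oinfo_bounds {Ω : Type} [Fintype Ω] {n : ℕ} {α : Fin n → Type}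
    [∀ i, Fintype (α i)] (hn : 2 ≤ n) (K : ℕ) (hK : ∀ i, Fintype.card (α i) ≤ K)
    (p : Ω → ℝ) (hp : ∀ ω, 0 ≤ p ω) (hp1 : ∑ ω, p ω = 1)
    (X : ∀ i, Ω → α i) :
    -(((n : ℝ) - 2) * Real.log K) ≤ Oinfo p X
    ∧ Oinfo p X ≤ ((n : ℝ) - 2) * Real.log K := by
  classical
  have hΩ : Nonempty Ω := by
    by_contra h
    rw [not_nonempty_iff] at h
    rw [Finset.univ_eq_empty, Finset.sum_empty] at hp1
    exact one_ne_zero hp1.symm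
  haveI hα : ∀ i, Nonempty (α i) := fun i => ⟨X i (Classical.arbitrary Ω)⟩
  set N := (n : ℝ) with hN
  set L := Real.log K with hL
  set H := ent p (fullvec X) with hH
  set h : Fin n → ℝ := fun j => ent p (X j) with hhdef
  set m : Fin n → ℝ := fun j => ent p (subvec X (univ \ {j})) with hmdef
  let j0 : Fin n := ⟨0, by omega⟩
  let j1 : Fin n := ⟨1, by omega⟩
  have hne : j0 ≠ j1 := by
    intro hcon
    have : (0 : ℕ) = 1 := congrArg Fin.val hcon
    omega
  -- basic facts
  have hh0 : ∀ j, 0 ≤ h j := fun j => ent_nonneg hp hp1 (X j)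
  have hhL : ∀ j, h j ≤ L := by
    intro j
    refine le_trans (ent_le_log_card hp hp1 (X j)) ?_
    rw [hL]
    have h1 : 0 < Fintype.card (α j) := Fintype.card_pos
    exact Real.log_le_log (by exact_mod_cast h1) (by exact_mod_cast hK j)
  have hmH : ∀ j, m j ≤ H := fun j => ent_subvec_le_full hp hp1 X _
  have hsub : ∀ j, m j ≤ ∑ k ∈ univ \ {j}, h k := fun j => subadd_chain hp hp1 X (univ \ {j})
  have hmono : h j1 ≤ m j0 := by
    refine ent_X_le_subvec hp hp1 X (j := j1) (s := univ \ {j0}) ?_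
    simp only [Finset.mem_sdiff, Finset.mem_univ, true_and, Finset.mem_singleton]
    exact fun hcon => hne hcon.symm
  -- sum helper
  have hsum1 : ∀ (f : Fin n → ℝ) (j : Fin n), ∑ k ∈ univ \ {j}, f k = (∑ k, f k) - f j := by
    intro f j
    rw [Finset.sum_sdiff_eq_sub (Finset.subset_univ {j}), Finset.sum_singleton]
  have hsum2 : ∀ (f : Fin n → ℝ), ∑ k ∈ univ \ ({j0, j1} : Finset (Fin n)), f k
      = (∑ k, f k) - f j0 - f j1 := by
    intro f
    rw [Finset.sum_sdiff_eq_sub (Finset.subset_univ _), Finset.sum_pair hne]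
    ring
  have hcard2 : (univ \ ({j0, j1} : Finset (Fin n))).card = n - 2 := by
    rw [Finset.card_sdiff_of_subset (Finset.subset_univ _), Finset.card_univ, Fintype.card_fin,
      Finset.card_pair hne]
  have hcast : ((n - 2 : ℕ) : ℝ) = N - 2 := by
    rw [hN]
    push_cast [hn]
    ring
  -- key bound: the tail sum of h
  have htail : (∑ k, h k) - h j0 - h j1 ≤ (N - 2) * L := by
    rw [← hsum2 h]
    calc ∑ k ∈ univ \ ({j0, j1} : Finset (Fin n)), h k
        ≤ ∑ k ∈ univ \ ({j0, j1} : Finset (Fin n)), L :=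
          Finset.sum_le_sum fun k _ => hhL k
      _ = (N - 2) * L := by
          rw [Finset.sum_const, hcard2, nsmul_eq_mul, hcast]
  have htail0 : 0 ≤ (∑ k, h k) - h j0 - h j1 := by
    rw [← hsum2 h]
    exact Finset.sum_nonneg fun k _ => hh0 k
  -- Oinfo decomposition
  have hOi : Oinfo p X = (N - 2) * H + ((∑ j, h j) - ∑ j, m j) := by
    unfold Oinfo vecH
    rw [Finset.sum_sub_distrib]
  -- UPPER BOUND
  have hchain : ∑ j ∈ univ \ {j0}, (H - m j) ≤ H - h j0 := by
    have hq := chainQ (p := p) hp hp1 X j0 (univ \ {j0}) (by simp)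
    have hins : insert j0 (univ \ ({j0} : Finset (Fin n))) = univ := by
      rw [← Finset.erase_eq, Finset.insert_erase (Finset.mem_univ j0)]
    rw [hins, ent_subvec_univ hp hp1] at hq
    exact hq
  have hupper : Oinfo p X ≤ (N - 2) * L := by
    have e1 : ∑ j, (H - m j) = N * H - ∑ j, m j := by
      rw [Finset.sum_sub_distrib, Finset.sum_const, Finset.card_univ, Fintype.card_fin,
        nsmul_eq_mul]
    have e2 : ∑ j ∈ univ \ {j0}, (H - m j) = (∑ j, (H - m j)) - (H - m j0) :=
      hsum1 _ j0
    have hm_lb : (N - 2) * H + m j0 + h j0 ≤ ∑ j, m j := by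
      rw [e2, e1] at hchain
      nlinarith [hchain]
    nlinarith [hOi, hm_lb, hmono, htail]
  -- LOWER BOUND
  have hlower : -((N - 2) * L) ≤ Oinfo p X := by
    have l0 : ∑ k ∈ univ \ ({j0, j1} : Finset (Fin n)), m k ≤ (N - 2) * H := by
      calc ∑ k ∈ univ \ ({j0, j1} : Finset (Fin n)), m k
          ≤ ∑ k ∈ univ \ ({j0, j1} : Finset (Fin n)), H :=
            Finset.sum_le_sum fun k _ => hmH k
        _ = (N - 2) * H := by
            rw [Finset.sum_const, hcard2, nsmul_eq_mul, hcast]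
    have l1 : (∑ k, m k) - m j0 - m j1 ≤ (N - 2) * H := by rw [← hsum2 m]; exact l0
    have l2 : m j0 ≤ (∑ k, h k) - h j0 := by rw [← hsum1 h j0]; exact hsub j0
    have l3 : m j1 ≤ (∑ k, h k) - h j1 := by rw [← hsum1 h j1]; exact hsub j1
    nlinarith [hOi, l1, l2, l3, htail]
  exact ⟨hlower, hupper⟩
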